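/- Let α > 1, β > −α, 0 < ε ≤ 1, and let h : (0,1] → ℝ be positive, monotone increasing, with h(x) ≤ x^α for all x ∈ (0,1]. Then for every s₀ > 0 there exists a constant C = C(h, α, β, s₀) such that for all s ≥ s₀ and all y ∈ (0,ε): y^β · ∫_y^ε exp(−s ∫_y^x dt/h(t)) dx ≤ C · ε^{α+β}/s. -/

import Mathlib

open MeasureTheory Set Real

lemma exp_neg_le_aux (n : ℕ) (hn : 0 < n) {t : ℝ} (ht : 0 < t) :
    Real.exp (-t) ≤ (n:ℝ)^n / t^n := by
  have hn' : (0:ℝ) < n := Nat.cast_pos.mpr hn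
  have h1 : t/n ≤ Real.exp (t/n) := by
    have := Real.add_one_le_exp (t/n)
    nlinarith
  have h2 : (t/n)^n ≤ Real.exp (t/n) ^ n :=
    pow_le_pow_left₀ (by positivity) h1 n
  have h3 : Real.exp (t/n) ^ n = Real.exp t := by
    rw [← Real.exp_nat_mul]
    congr 1
    field_simp
  rw [h3] at h2
  have h4 : (t/n)^n = t^n / (n:ℝ)^n := div_pow t n n
  rw [h4] at h2
  have h5 : (0:ℝ) < t^n / (n:ℝ)^n := by positivity
  rw [Real.exp_neg]
  calc (Real.exp t)⁻¹ ≤ (t^n / (n:ℝ)^n)⁻¹ := by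
        apply inv_anti₀ h5 h2
    _ = (n:ℝ)^n / t^n := by rw [inv_div]

lemma integral_exp_decay {k a b : ℝ} (hk : 0 < k) :
    ∫ x in a..b, Real.exp (-(k*(x-a))) ≤ 1/k := by
  have hder : ∀ x ∈ Set.uIcc a b,
      HasDerivAt (fun x => -(Real.exp (-(k*(x-a)))/k)) (Real.exp (-(k*(x-a)))) x := by
    intro x _
    have h1 : HasDerivAt (fun x : ℝ => -(k*(x-a))) (-k) x := by
      exact (((hasDerivAt_id x).sub_const a).const_mul k).neg.congr_deriv (by ring)
    have h3 := (h1.exp.div_const k).neg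
    exact h3.congr_deriv (by field_simp)
  have heq := intervalIntegral.integral_eq_sub_of_hasDerivAt hder
    (by apply Continuous.intervalIntegrable; fun_prop)
  rw [heq]
  have h1 : (0:ℝ) < Real.exp (-(k*(b-a))) := Real.exp_pos _
  have h2 : Real.exp (-(k*(a-a))) = 1 := by simp
  rw [h2]
  have h3 : 0 < 1/k := by positivity
  have h4 : Real.exp (-(k*(b-a)))/k ≥ 0 := by positivity
  linarith

lemma keyM (α β ε : ℝ) (hα : 1 < α) (hε : 0 < ε) (hε1 : ε ≤ 1)
    (c : ℝ) (hc : 0 < c) (n : ℕ) (hn : 0 < n) (hne : 0 ≤ β + n*(α-1))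
    {y : ℝ} (hy0 : 0 < y) (hyε : y ≤ ε) :
    y^β * Real.exp (-(c * y^(1-α))) * ε^α ≤ (max 1 ((n:ℝ)^n/c^n)) * ε^(α+β) := by
  have hy1 : y ≤ 1 := hyε.trans hε1
  have hεα : (0:ℝ) < ε^α := Real.rpow_pos_of_pos hε α
  have hyβ : (0:ℝ) < y^β := Real.rpow_pos_of_pos hy0 β
  have ht0 : 0 < c * y^(1-α) := mul_pos hc (Real.rpow_pos_of_pos hy0 _)
  rcases le_or_gt 0 β with hb | hb
  · have h1 : y^β ≤ ε^β := Real.rpow_le_rpow hy0.le hyε hb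
    have h2 : Real.exp (-(c * y^(1-α))) ≤ 1 := by
      rw [Real.exp_le_one_iff]; linarith
    have h3 : ε^β * ε^α = ε^(α+β) := by
      rw [← Real.rpow_add hε]; ring_nf
    have hεβ : (0:ℝ) < ε^β := Real.rpow_pos_of_pos hε β
    calc y^β * Real.exp (-(c * y^(1-α))) * ε^α ≤ ε^β * 1 * ε^α := by
          apply mul_le_mul_of_nonneg_right _ hεα.le
          nlinarith [Real.exp_pos (-(c * y^(1-α)))]
      _ = ε^(α+β) := by rw [mul_one, h3]
      _ ≤ (max 1 ((n:ℝ)^n/c^n)) * ε^(α+β) := by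
          nlinarith [le_max_left (1:ℝ) ((n:ℝ)^n/c^n), Real.rpow_pos_of_pos hε (α+β)]
  · have hK : ((n:ℝ)^n/c^n) ≤ max 1 ((n:ℝ)^n/c^n) := le_max_right _ _
    have hexp : Real.exp (-(c * y^(1-α))) ≤ (n:ℝ)^n / (c * y^(1-α))^n :=
      exp_neg_le_aux n hn ht0
    have hyn : (y^(1-α))^n = y^((1-α)*(n:ℝ)) := by
      rw [← Real.rpow_natCast (y^(1-α)) n, ← Real.rpow_mul hy0.le]
    have h4 : y^β * ((n:ℝ)^n / (c * y^(1-α))^n) = ((n:ℝ)^n/c^n) * y^(β - (1-α)*(n:ℝ)) := by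
      have hcn : (c:ℝ)^n ≠ 0 := by positivity
      have hyc : y^((1-α)*(n:ℝ)) ≠ 0 := (Real.rpow_pos_of_pos hy0 _).ne'
      rw [mul_pow, hyn, Real.rpow_sub hy0]
      field_simp
    have h5 : y^(β - (1-α)*(n:ℝ)) ≤ 1 :=
      Real.rpow_le_one hy0.le hy1 (by nlinarith [hne])
    have h6 : ε^α ≤ ε^(α+β) := Real.rpow_le_rpow_of_exponent_ge hε hε1 (by linarith)
    calc y^β * Real.exp (-(c * y^(1-α))) * ε^α
        ≤ (y^β * ((n:ℝ)^n / (c * y^(1-α))^n)) * ε^α := by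
          apply mul_le_mul_of_nonneg_right (mul_le_mul_of_nonneg_left hexp hyβ.le) hεα.le
      _ = (((n:ℝ)^n/c^n) * y^(β - (1-α)*(n:ℝ))) * ε^α := by rw [h4]
      _ ≤ (((n:ℝ)^n/c^n) * 1) * ε^α := by
          apply mul_le_mul_of_nonneg_right _ hεα.le
          apply mul_le_mul_of_nonneg_left h5 (by positivity)
      _ ≤ (max 1 ((n:ℝ)^n/c^n)) * ε^(α+β) := by
          rw [mul_one]
          apply mul_le_mul hK h6 hεα.le (by positivity)

set_option maxHeartbeats 1000000 in
/-- Column-sum bound for the kernel `k₂` in the Schur test of Lemma 3.2: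
for `s ≥ s₀ > 0`, `y^β ∫_y^ε exp(−s ∫_y^x dt/h(t)) dx ≤ C ε^{α+β}/s`. -/
theorem stmt_7 (α β ε : ℝ) (hα : 1 < α) (hβ : -α < β) (hε : 0 < ε) (hε1 : ε ≤ 1)
    (h : ℝ → ℝ)
    (hpos : ∀ x ∈ Ioc (0:ℝ) 1, 0 < h x)
    (hmono : ∀ x ∈ Ioc (0:ℝ) 1, ∀ y ∈ Ioc (0:ℝ) 1, x ≤ y → h x ≤ h y)
    (hbound : ∀ x ∈ Ioc (0:ℝ) 1, h x ≤ x ^ α)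
    (s₀ : ℝ) (hs₀ : 0 < s₀) :
    ∃ C > (0:ℝ), ∀ s, s₀ ≤ s → ∀ y ∈ Ioo (0:ℝ) ε,
      y ^ β * ∫ x in y..ε, Real.exp (-(s * ∫ t in y..x, 1 / h t)) ≤
        C * ε ^ (α + β) / s := by
  have hα0 : (0:ℝ) < α - 1 := by linarith
  obtain ⟨n₀, hn₀⟩ := exists_nat_ge ((-β)/(α-1))
  set n : ℕ := n₀ + 1 with hn_def
  have hn : 0 < n := Nat.succ_pos _
  have hne : 0 ≤ β + n*(α-1) := by
    have h1 : (-β)/(α-1) ≤ (n:ℝ) := by rw [hn_def]; push_cast; linarith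
    rw [div_le_iff₀ hα0] at h1
    linarith
  set c : ℝ := s₀ / (2:ℝ)^α with hc_def
  have h2α : (0:ℝ) < (2:ℝ)^α := Real.rpow_pos_of_pos two_pos α
  have hc : 0 < c := div_pos hs₀ h2α
  set K : ℝ := max 1 ((n:ℝ)^n/c^n) with hK_def
  have hK1 : (1:ℝ) ≤ K := le_max_left _ _
  refine ⟨(2:ℝ)^α + K, by positivity, ?_⟩
  intro s hs y hy
  obtain ⟨hy0, hyε⟩ := hy
  have hy1 : y ≤ 1 := le_trans hyε.le hε1
  have hs' : 0 < s := lt_of_lt_of_le hs₀ hs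
  have hαβ : 0 < α + β := by linarith
  have hpos' : ∀ t, y ≤ t → t ≤ ε → 0 < h t := fun t h1 h2 =>
    hpos t ⟨lt_of_lt_of_le hy0 h1, le_trans h2 hε1⟩
  have hint : ∀ a b : ℝ, y ≤ a → a ≤ b → b ≤ ε →
      IntervalIntegrable (fun t => 1 / h t) volume a b := by
    intro a b hya hab hbε
    apply AntitoneOn.intervalIntegrable
    rw [uIcc_of_le hab]
    intro u hu v hv huv
    have hu' : u ∈ Ioc (0:ℝ) 1 :=
      ⟨lt_of_lt_of_le hy0 (hya.trans hu.1), le_trans (hu.2.trans hbε) hε1⟩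
    have hv' : v ∈ Ioc (0:ℝ) 1 :=
      ⟨lt_of_lt_of_le hy0 (hya.trans hv.1), le_trans (hv.2.trans hbε) hε1⟩
    exact one_div_le_one_div_of_le (hpos u hu') (hmono u hu' v hv' huv)
  have hB : ∀ t B : ℝ, y ≤ t → t ≤ 1 → t ≤ B → h t ≤ B^α := by
    intro t B hyt ht1 htB
    have ht0 : 0 < t := lt_of_lt_of_le hy0 hyt
    calc h t ≤ t^α := hbound t ⟨ht0, ht1⟩
      _ ≤ B^α := Real.rpow_le_rpow ht0.le htB (by linarith)
  have hlow : ∀ a b B : ℝ, y ≤ a → a ≤ b → b ≤ ε → 0 < B →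
      (∀ t ∈ Icc a b, h t ≤ B) → (b - a)/B ≤ ∫ t in a..b, 1 / h t := by
    intro a b B hya hab hbε hB0 hhB
    have h1 := intervalIntegral.integral_mono_on (μ := volume) hab
      (intervalIntegrable_const (c := 1/B)) (hint a b hya hab hbε)
      (fun t ht => one_div_le_one_div_of_le
        (hpos' t (hya.trans ht.1) (ht.2.trans hbε)) (hhB t ht))
    simpa [intervalIntegral.integral_const, smul_eq_mul, div_eq_mul_inv, one_div] using h1
  have hFnn : ∀ a b : ℝ, y ≤ a → a ≤ b → b ≤ ε → 0 ≤ ∫ t in a..b, 1 / h t := by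
    intro a b hya hab hbε
    apply intervalIntegral.integral_nonneg hab
    intro u hu
    exact le_of_lt (one_div_pos.mpr (hpos' u (hya.trans hu.1) (hu.2.trans hbε)))
  have hFadd : ∀ a b : ℝ, y ≤ a → a ≤ b → b ≤ ε →
      (∫ t in y..a, 1 / h t) + ∫ t in a..b, 1 / h t = ∫ t in y..b, 1 / h t :=
    fun a b hya hab hbε =>
      intervalIntegral.integral_add_adjacent_intervals
        (hint y a le_rfl hya (hab.trans hbε)) (hint a b hya hab hbε)
  have hfint : ∀ l r : ℝ, y ≤ l → l ≤ r → r ≤ ε →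
      IntervalIntegrable (fun x => Real.exp (-(s * ∫ t in y..x, 1 / h t))) volume l r := by
    intro l r hyl hlr hrε
    apply AntitoneOn.intervalIntegrable
    rw [uIcc_of_le hlr]
    intro u hu v hv huv
    simp only
    apply Real.exp_le_exp.mpr
    have h1 := hFnn u v (hyl.trans hu.1) huv (hv.2.trans hrε)
    have h2 := hFadd u v (hyl.trans hu.1) huv (hv.2.trans hrε)
    nlinarith
  have part1 : ∀ z : ℝ, y ≤ z → z ≤ 2*y → z ≤ ε →
      (∫ x in y..z, Real.exp (-(s * ∫ t in y..x, 1 / h t))) ≤ (2*y)^α / s := by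
    intro z hyz hz2 hzε
    have h2y : (0:ℝ) < (2*y)^α := Real.rpow_pos_of_pos (by linarith) α
    have hk₁ : 0 < s / (2*y)^α := by positivity
    calc (∫ x in y..z, Real.exp (-(s * ∫ t in y..x, 1 / h t)))
        ≤ ∫ x in y..z, Real.exp (-((s/(2*y)^α) * (x - y))) := by
          apply intervalIntegral.integral_mono_on hyz (hfint y z le_rfl hyz hzε)
            (by apply Continuous.intervalIntegrable; fun_prop)
          intro x hx
          apply Real.exp_le_exp.mpr
          have hFx := hlow y x ((2*y)^α) le_rfl hx.1 (hx.2.trans hzε) h2y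
            (fun t ht => hB t (2*y) ht.1 ((ht.2.trans hx.2).trans (hzε.trans hε1))
              ((ht.2.trans hx.2).trans hz2))
          have he : (s/(2*y)^α) * (x - y) = s * ((x - y)/(2*y)^α) := by ring
          rw [he]
          apply neg_le_neg
          exact mul_le_mul_of_nonneg_left hFx hs'.le
      _ ≤ 1 / (s/(2*y)^α) := integral_exp_decay hk₁
      _ = (2*y)^α / s := one_div_div _ _
  have hyb : (0:ℝ) ≤ y^β := (Real.rpow_pos_of_pos hy0 β).le
  have hfact : y^β * ((2*y)^α/s) = (2:ℝ)^α * y^(α+β) / s := by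
    rw [Real.mul_rpow (by norm_num : (0:ℝ) ≤ 2) hy0.le, Real.rpow_add hy0]
    ring
  have hyab : y^(α+β) ≤ ε^(α+β) := Real.rpow_le_rpow hy0.le hyε.le hαβ.le
  have hεab : (0:ℝ) < ε^(α+β) := Real.rpow_pos_of_pos hε _
  rcases le_or_gt ε (2*y) with hA | hB2
  · have hI := part1 ε hyε.le hA le_rfl
    calc y^β * ∫ x in y..ε, Real.exp (-(s * ∫ t in y..x, 1 / h t))
        ≤ y^β * ((2*y)^α/s) := mul_le_mul_of_nonneg_left hI hyb
      _ = (2:ℝ)^α * y^(α+β) / s := hfact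
      _ ≤ ((2:ℝ)^α + K) * ε^(α+β) / s := by
          apply div_le_div_of_nonneg_right ?_ hs'.le
          nlinarith
  · have h2yε : 2*y ≤ ε := hB2.le
    have hy2 : y ≤ 2*y := by linarith
    have hsplit := intervalIntegral.integral_add_adjacent_intervals
      (hfint y (2*y) le_rfl hy2 h2yε) (hfint (2*y) ε hy2 h2yε le_rfl)
    have hI1 := part1 (2*y) hy2 le_rfl h2yε
    have hεα : (0:ℝ) < ε^α := Real.rpow_pos_of_pos hε α
    have h2y : (0:ℝ) < (2*y)^α := Real.rpow_pos_of_pos (by linarith) α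
    have hF2y : y/(2*y)^α ≤ ∫ t in y..(2*y), 1 / h t := by
      have h1 := hlow y (2*y) ((2*y)^α) le_rfl hy2 h2yε h2y
        (fun t ht => hB t (2*y) ht.1 (ht.2.trans (h2yε.trans hε1)) ht.2)
      have he : 2*y - y = y := by ring
      rwa [he] at h1
    have hid : s₀ * (y/(2*y)^α) = c * y^(1-α) := by
      have hyα : (0:ℝ) < y^α := Real.rpow_pos_of_pos hy0 α
      rw [Real.mul_rpow (by norm_num : (0:ℝ) ≤ 2) hy0.le, Real.rpow_sub hy0,
        Real.rpow_one, hc_def]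
      field_simp
    have hI2 : (∫ x in (2*y)..ε, Real.exp (-(s * ∫ t in y..x, 1 / h t)))
        ≤ Real.exp (-(c * y^(1-α))) * (ε^α / s) := by
      calc (∫ x in (2*y)..ε, Real.exp (-(s * ∫ t in y..x, 1 / h t)))
          ≤ ∫ x in (2*y)..ε,
              Real.exp (-(c * y^(1-α))) * Real.exp (-((s/ε^α) * (x - 2*y))) := by
            apply intervalIntegral.integral_mono_on h2yε (hfint (2*y) ε hy2 h2yε le_rfl)
              (by apply Continuous.intervalIntegrable; fun_prop)
            intro x hx
            rw [← Real.exp_add, ← neg_add]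
            apply Real.exp_le_exp.mpr
            apply neg_le_neg
            have hF2 := hFadd (2*y) x hy2 hx.1 hx.2
            have hmid := hlow (2*y) x (ε^α) hy2 hx.1 hx.2 hεα
              (fun t ht => hB t ε (hy2.trans ht.1) ((ht.2.trans hx.2).trans hε1)
                (ht.2.trans hx.2))
            rw [← hid, ← hF2, mul_add]
            have e1 : s₀ * (y/(2*y)^α) ≤ s * (∫ t in y..(2*y), 1 / h t) := by
              have h0 : (0:ℝ) ≤ y/(2*y)^α := by positivity
              nlinarith [hF2y]
            have e2 : (s/ε^α) * (x - 2*y) ≤ s * ∫ t in (2*y)..x, 1 / h t := by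
              have he : (s/ε^α) * (x - 2*y) = s * ((x - 2*y)/ε^α) := by ring
              rw [he]
              exact mul_le_mul_of_nonneg_left hmid hs'.le
            linarith
        _ = Real.exp (-(c * y^(1-α))) * ∫ x in (2*y)..ε, Real.exp (-((s/ε^α) * (x - 2*y))) :=
            intervalIntegral.integral_const_mul _ _
        _ ≤ Real.exp (-(c * y^(1-α))) * (1/(s/ε^α)) :=
            mul_le_mul_of_nonneg_left (integral_exp_decay (by positivity)) (Real.exp_pos _).le
        _ = Real.exp (-(c * y^(1-α))) * (ε^α / s) := by rw [one_div_div]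
    have key := keyM α β ε hα hε hε1 c hc n hn hne hy0 hyε.le
    rw [← hsplit, mul_add]
    have t1 : y^β * (∫ x in y..(2*y), Real.exp (-(s * ∫ t in y..x, 1 / h t)))
        ≤ (2:ℝ)^α * ε^(α+β) / s := by
      calc y^β * (∫ x in y..(2*y), Real.exp (-(s * ∫ t in y..x, 1 / h t)))
          ≤ y^β * ((2*y)^α/s) := mul_le_mul_of_nonneg_left hI1 hyb
        _ = (2:ℝ)^α * y^(α+β) / s := hfact
        _ ≤ (2:ℝ)^α * ε^(α+β) / s := by
            apply div_le_div_of_nonneg_right ?_ hs'.le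
            nlinarith
    have t2 : y^β * (∫ x in (2*y)..ε, Real.exp (-(s * ∫ t in y..x, 1 / h t)))
        ≤ K * ε^(α+β) / s := by
      calc y^β * (∫ x in (2*y)..ε, Real.exp (-(s * ∫ t in y..x, 1 / h t)))
          ≤ y^β * (Real.exp (-(c * y^(1-α))) * (ε^α / s)) :=
            mul_le_mul_of_nonneg_left hI2 hyb
        _ = (y^β * Real.exp (-(c * y^(1-α))) * ε^α) / s := by ring
        _ ≤ K * ε^(α+β) / s := div_le_div_of_nonneg_right key hs'.le
    have he : ((2:ℝ)^α + K) * ε^(α+β) / s = (2:ℝ)^α * ε^(α+β)/s + K * ε^(α+β)/s := by ring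
    rw [he]
    linarith
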